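/- In the rational (cuspidal) limit where σ(ξ) = ξ, ζ(ξ) = 1/ξ, ℘(ξ) = 1/ξ², ℘'(ξ) = -2/ξ³, the system ξ₁ + ξ₂ = U₁ and (α-ξ₁)(α-ξ₂)/((α+ξ₁)(α+ξ₂)) = e^{-2U₁/α - 2U₃/α³} is solved by ξ₁ + ξ₂ = U₁ and ξ₁ξ₂ = -α² + αU₁·coth(U₃/α³ + U₁/α). That is: if ξ₁ + ξ₂ = U₁ and ξ₁ξ₂ = -α² + αU₁·cosh(w)/sinh(w) with w = U₃/α³ + U₁/α, sinh(w) ≠ 0, then (α-ξ₁)(α-ξ₂)/((α+ξ₁)(α+ξ₂)) = e^{-2w}. -/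

import Mathlib

open Complex

/-- explicit rational-limit solution of the generalized Jacobi
inversion problem. -/
theorem rational_limit_jacobi_inversion (α U₁ U₃ ξ₁ ξ₂ : ℂ) (hα : α ≠ 0)
    (hden : (α + ξ₁) * (α + ξ₂) ≠ 0)
    (hw : Complex.sinh (U₃ / α ^ 3 + U₁ / α) ≠ 0)
    (hsum : ξ₁ + ξ₂ = U₁)
    (hprod : ξ₁ * ξ₂ = -α ^ 2 + α * U₁ *
      Complex.cosh (U₃ / α ^ 3 + U₁ / α) / Complex.sinh (U₃ / α ^ 3 + U₁ / α)) :
    (α - ξ₁) * (α - ξ₂) / ((α + ξ₁) * (α + ξ₂))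
      = Complex.exp (-2 * (U₃ / α ^ 3 + U₁ / α)) := by
  obtain ⟨w, hwdef⟩ : ∃ w, w = U₃ / α ^ 3 + U₁ / α := ⟨_, rfl⟩
  rw [← hwdef] at hw hprod ⊢
  have hplus : (α + ξ₁) * (α + ξ₂) * Complex.sinh w = α * U₁ * Complex.exp w := by
    have h1 : (α + ξ₁) * (α + ξ₂) = α ^ 2 + α * (ξ₁ + ξ₂) + ξ₁ * ξ₂ := by ring
    rw [h1, hsum, hprod]
    field_simp
    linear_combination U₁ * Complex.cosh_add_sinh w
  have hminus : (α - ξ₁) * (α - ξ₂) * Complex.sinh w = α * U₁ * Complex.exp (-w) := by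
    have h1 : (α - ξ₁) * (α - ξ₂) = α ^ 2 - α * (ξ₁ + ξ₂) + ξ₁ * ξ₂ := by ring
    rw [h1, hsum, hprod]
    field_simp
    linear_combination U₁ * Complex.cosh_sub_sinh w
  have h3 : Complex.exp w * Complex.exp (-2 * w) = Complex.exp (-w) := by
    rw [← Complex.exp_add]; ring_nf
  have key : (α - ξ₁) * (α - ξ₂) = (α + ξ₁) * (α + ξ₂) * Complex.exp (-2 * w) :=
    mul_right_cancel₀ hw (by
      linear_combination hminus - Complex.exp (-2 * w) * hplus - α * U₁ * h3)
  rw [key, mul_comm ((α + ξ₁) * (α + ξ₂)), mul_div_assoc, div_self hden, mul_one]
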